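/- Let S ∈ S_d(U, Y) with de Branges-Rovnyak space H(K_S), let C : H(K_S) → Y be evaluation at 0 (Cf = f(0)), D = S(0) : U → Y, and suppose A = (A_1,...,A_d) : H(K_S) → H(K_S)^d solves the Gleason problem f(z) - f(0) = Σ_j z_j (A_j f)(z) for all f ∈ H(K_S), and B = (B_1,...,B_d) : U → H(K_S)^d solves S(z)u - S(0)u = Σ_j z_j (B_j u)(z) for all u ∈ U. Then S(z) = D + C (I - Z(z)A)^{-1} Z(z) B for all z ∈ B^d for which I - Z(z)A is invertible. -/

import Mathlib

open scoped ENNReal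
set_option synthInstance.maxHeartbeats 400000
set_option maxHeartbeats 1000000

instance PiLp.instCompleteSpace' {p : ℝ≥0∞} {ι : Type*} {β : ι → Type*}
    [∀ i, UniformSpace (β i)] [∀ i, CompleteSpace (β i)] : CompleteSpace (PiLp p β) :=
  (PiLp.uniformEquiv p β).completeSpace_iff.2 (Pi.complete β)

/-- The row operator Z(z) : X^d → X. -/
noncomputable def rowOp {X : Type*} [NormedAddCommGroup X] [NormedSpace ℂ X]
    {d : ℕ} (z : EuclideanSpace ℂ (Fin d)) : PiLp 2 (fun _ : Fin d => X) →L[ℂ] X :=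
  ∑ j : Fin d, z j • ((ContinuousLinearMap.proj j : (∀ _ : Fin d, X) →L[ℂ] X).comp
      (PiLp.continuousLinearEquiv 2 ℂ (fun _ : Fin d => X)).toContinuousLinearMap)

/-- if A solves the Gleason problem for H(K_S), B solves the Gleason
problem for S, C is evaluation at 0 and D = S(0), then
S(z) = D + C(I - Z(z)A)⁻¹Z(z)B wherever I - Z(z)A is invertible.
The de Branges-Rovnyak space H(K_S) is axiomatized by a kernel-section map k and an
evaluation map ev with the reproducing property and the kernel identity for K_S. -/
theorem gleason_solutions_give_realization
    {G Y H : Type*}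
    [NormedAddCommGroup G] [InnerProductSpace ℂ G] [CompleteSpace G]
    [NormedAddCommGroup Y] [InnerProductSpace ℂ Y] [CompleteSpace Y]
    [NormedAddCommGroup H] [InnerProductSpace ℂ H] [CompleteSpace H]
    {d : ℕ} (hd : 1 ≤ d)
    (S : EuclideanSpace ℂ (Fin d) → G →L[ℂ] Y)
    (k : EuclideanSpace ℂ (Fin d) → Y →L[ℂ] H)
    (ev : EuclideanSpace ℂ (Fin d) → H →L[ℂ] Y)
    (hrep : ∀ ζ : EuclideanSpace ℂ (Fin d), ‖ζ‖ < 1 → ∀ (y : Y) (f : H),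
      (inner ℂ (k ζ y) f : ℂ) = (inner ℂ y (ev ζ f) : ℂ))
    (hker : ∀ z ζ : EuclideanSpace ℂ (Fin d), ‖z‖ < 1 → ‖ζ‖ < 1 →
      (1 - ∑ j, z j * (starRingEnd ℂ) (ζ j)) • ((ev z).comp (k ζ))
        = 1 - (S z).comp (ContinuousLinearMap.adjoint (S ζ)))
    (A : H →L[ℂ] PiLp 2 (fun _ : Fin d => H))
    (B : G →L[ℂ] PiLp 2 (fun _ : Fin d => H))
    (C : H →L[ℂ] Y) (D : G →L[ℂ] Y)
    (hC : C = ev 0) (hD : D = S 0)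
    (hGleasonA : ∀ (f : H) (z : EuclideanSpace ℂ (Fin d)), ‖z‖ < 1 →
      ev z f - ev 0 f = ∑ j, z j • ev z ((A f) j))
    (hGleasonB : ∀ (u : G) (z : EuclideanSpace ℂ (Fin d)), ‖z‖ < 1 →
      S z u - S 0 u = ∑ j, z j • ev z ((B u) j)) :
    ∀ z : EuclideanSpace ℂ (Fin d), ‖z‖ < 1 →
      IsUnit ((1 : H →L[ℂ] H) - (rowOp z).comp A) →
      S z = D + ((C.comp (Ring.inverse (1 - (rowOp z).comp A))).comp (rowOp z)).comp B := by
  intro z hz hu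
  set T : H →L[ℂ] H := 1 - (rowOp z).comp A with hT
  have hrow : ∀ v : PiLp 2 (fun _ : Fin d => H), rowOp z v = ∑ j, z j • v j := by
    intro v
    simp [rowOp, ContinuousLinearMap.sum_apply]
  have hevT : (ev z).comp T = C := by
    ext f
    have := hGleasonA f z hz
    simp only [hT, ContinuousLinearMap.comp_apply, ContinuousLinearMap.sub_apply,
      ContinuousLinearMap.one_apply, map_sub, hC, hrow, map_sum, map_smul]
    rw [sub_eq_iff_eq_add] at this ⊢
    rw [this, add_comm]
  have hinv : T.comp (Ring.inverse T) = 1 := Ring.mul_inverse_cancel T hu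
  have hCinv : C.comp (Ring.inverse T) = ev z := by
    rw [← hevT, ContinuousLinearMap.comp_assoc, hinv]
    simp [ContinuousLinearMap.one_def]
  ext u
  have hB := hGleasonB u z hz
  simp only [ContinuousLinearMap.add_apply, ContinuousLinearMap.comp_apply] at *
  rw [← ContinuousLinearMap.comp_apply, hCinv, hrow, map_sum]
  simp only [map_smul]
  rw [← hB, hD]
  abel
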